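/- Stability of the combinatorial R under large coordinates (used in the proof of Proposition 3.3): fix n ≥ 3 and an index i. For every y ∈ (ℤ≥0)^n there exists N ∈ ℕ (indeed N = y_1+⋯+y_n works) such that for every x ∈ (ℤ≥0)^n with x_i ≥ N: (a) Q_a(x + e_i, y) = Q_a(x, y) for every a, where e_i is the i-th standard unit vector; consequently (b) writing ōR(x,y) = (ỹ, x̃) with ỹ_a = y_a + Q_{a−1}(x,y) − Q_a(x,y) and x̃_a = x_a + Q_a(x,y) − Q_{a−1}(x,y), one has ōR(x+e_i, y) = (ỹ, x̃+e_i). Symmetrically, for every x there exists N' such that for all y with y_i ≥ N', ōR(x, y+e_i) = (ỹ+e_i, x̃). -/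

import Mathlib

/- Common setup: crystals `B_l`, `B∨_l` for `U_q(sl_n^)`, combinatorial `R`, `R∨`, `R∨∨`
and the combinatorial `K` maps, following Kuniba–Okado–Yamada,
"Box-Ball System with Reflecting End".  Elements of `B_l` (and of `B∨_l`) are encoded as
integer-valued vectors indexed by `ZMod n` (coordinates read modulo `n`), membership in
`B_l` being expressed by the predicate `memB l`.  The affinization `Aff(B_l)` is encoded
as `ℤ × (ZMod n → ℤ)`, the pair `(d, x)` standing for `z^d x`. -/

namespace BBS

abbrev V (n : ℕ) := ZMod n → ℤ

variable {n : ℕ}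

/-- The candidate (for `k+1`, `0 ≤ k ≤ n-1`) in the minimum defining `Q_i(x,y)`:
`Σ_{j=1}^{k} x_{i+j} + Σ_{j=k+2}^{n} y_{i+j}`. -/
def Qt (x y : V n) (i : ZMod n) (k : ℕ) : ℤ :=
  (∑ j ∈ Finset.range k, x (i + (j : ZMod n) + 1)) +
    ∑ j ∈ Finset.Ico (k + 1) n, y (i + (j : ZMod n) + 1)

/-- `Qe x y i = Q_i(x,y) = min_{1 ≤ k ≤ n} ( Σ_{j=1}^{k−1} x_{i+j} + Σ_{j=k+1}^{n} y_{i+j} )`. -/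
def Qe (x y : V n) (i : ZMod n) : ℤ :=
  Finset.fold min (Qt x y i 0) (Qt x y i) (Finset.Ico 1 n)

/-- `Pe x y i = P_i(x,y) = min(x_{i+1}, y_{i+1})`. -/
def Pe (x y : V n) (i : ZMod n) : ℤ := min (x (i + 1)) (y (i + 1))

/-- Classical combinatorial `R : B_l ⊗ B_m → B_m ⊗ B_l`, `(x,y) ↦ (ỹ,x̃)`. -/
def Rbar (x y : V n) : V n × V n :=
  (fun i => y i + Qe x y (i - 1) - Qe x y i, fun i => x i + Qe x y i - Qe x y (i - 1))

/-- Classical combinatorial `R∨ : B_l ⊗ B∨_m → B∨_m ⊗ B_l`, `(x,y) ↦ (ỹ,x̃)`. -/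
def Rvbar (x y : V n) : V n × V n :=
  (fun i => y i + Pe x y i - Pe x y (i - 1), fun i => x i + Pe x y i - Pe x y (i - 1))

/-- Classical combinatorial `R∨∨ : B∨_l ⊗ B∨_m → B∨_m ⊗ B∨_l`, `(x,y) ↦ (ỹ,x̃)`. -/
def Rvvbar (x y : V n) : V n × V n :=
  (fun i => y i + Qe y x i - Qe y x (i - 1), fun i => x i + Qe y x (i - 1) - Qe y x i)

/-- The affinization: `(d, x)` stands for `z^d x`. -/
abbrev Aff (n : ℕ) := ℤ × V n

/-- Affine combinatorial `R`: `z^d x ⊗ z^e y ↦ z^{e−Q₀(x,y)} ỹ ⊗ z^{d+Q₀(x,y)} x̃`. -/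
def Raff (p : Aff n × Aff n) : Aff n × Aff n :=
  ((p.2.1 - Qe p.1.2 p.2.2 0, (Rbar p.1.2 p.2.2).1),
    (p.1.1 + Qe p.1.2 p.2.2 0, (Rbar p.1.2 p.2.2).2))

/-- Affine combinatorial `R∨`: `z^d x ⊗ z^e y ↦ z^{e−P₀(x,y)} ỹ ⊗ z^{d+P₀(x,y)} x̃`. -/
def Rvee (p : Aff n × Aff n) : Aff n × Aff n :=
  ((p.2.1 - Pe p.1.2 p.2.2 0, (Rvbar p.1.2 p.2.2).1),
    (p.1.1 + Pe p.1.2 p.2.2 0, (Rvbar p.1.2 p.2.2).2))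

/-- Affine combinatorial `R∨∨`: `z^d x ⊗ z^e y ↦ z^{e−Q₀(y,x)} ỹ ⊗ z^{d+Q₀(y,x)} x̃`. -/
def Rvv (p : Aff n × Aff n) : Aff n × Aff n :=
  ((p.2.1 - Qe p.2.2 p.1.2 0, (Rvvbar p.1.2 p.2.2).1),
    (p.1.1 + Qe p.2.2 p.1.2 0, (Rvvbar p.1.2 p.2.2).2))

/-- `κ =` Rotateleft: `κ(x) = (x_2, …, x_n, x_1)`. -/
def rotL (x : V n) : V n := fun i => x (i + 1)

/-- `I` for Rotateleft: `I(x) = −x_1`. -/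
def Irot (x : V n) : ℤ := -x 1

/-- `κ =` Switch₁ₙ (`n` even): exchanges the coordinate pairs
`(x_1,x_n), (x_2,x_3), (x_4,x_5), …, (x_{n−2},x_{n−1})`. -/
def sw1n (x : V n) : V n := fun i => if i.val % 2 = 1 then x (i - 1) else x (i + 1)

/-- `I` for Switch₁ₙ: `I(x) = x_n − x_1`. -/
def I1n (x : V n) : ℤ := x 0 - x 1

/-- `κ =` Switch₁₂ (`n` even): exchanges the coordinate pairs
`(x_1,x_2), (x_3,x_4), …, (x_{n−1},x_n)`. -/
def sw12 (x : V n) : V n := fun i => if i.val % 2 = 1 then x (i + 1) else x (i - 1)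

/-- `I` for Switch₁₂: `I(x) = 0`. -/
def I12 (_ : V n) : ℤ := 0

/-- Combinatorial `K : Aff(B_l) → Aff(B∨_l)`, `z^d x ↦ z^{−d+I(x)} κ(x)`. -/
def Kmap (κ : V n → V n) (I : V n → ℤ) (q : Aff n) : Aff n := (-q.1 + I q.2, κ q.2)

/-- Combinatorial `K∨ : Aff(B∨_l) → Aff(B_l)`, `z^d x ↦ z^{−d−I(x)} κ(x)`. -/
def Kvmap (κ : V n → V n) (I : V n → ℤ) (q : Aff n) : Aff n := (-q.1 - I q.2, κ q.2)

/-- `K₂`: apply `K` to the second tensor factor. -/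
def K2 (κ : V n → V n) (I : V n → ℤ) (p : Aff n × Aff n) : Aff n × Aff n :=
  (p.1, Kmap κ I p.2)

/-- `K∨₁`: apply `K∨` to the first tensor factor. -/
def Kv1 (κ : V n → V n) (I : V n → ℤ) (p : Aff n × Aff n) : Aff n × Aff n :=
  (Kvmap κ I p.1, p.2)

/-- `x ∈ B_l` (equivalently `x ∈ B∨_l`): all coordinates nonnegative, summing to `l`. -/
def memB (l : ℕ) (x : V n) : Prop :=
  (∀ i, 0 ≤ x i) ∧ (∑ j ∈ Finset.range n, x (j : ZMod n)) = (l : ℤ)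

end BBS

namespace BBS

/-- The `i`-th standard unit vector. -/
def eV (i : ZMod n) : V n := fun a => if a = i then 1 else 0


lemma sum_range_eq_univ [NeZero n] (z : V n) :
    ∑ j ∈ Finset.range n, z (j : ZMod n) = ∑ c : ZMod n, z c := by
  refine Finset.sum_bij' (fun j _ => (j : ZMod n)) (fun c _ => c.val) ?_ ?_ ?_ ?_ ?_
  · intro j hj; exact Finset.mem_univ _
  · intro c _; exact Finset.mem_range.2 (ZMod.val_lt c)
  · intro j hj; exact ZMod.val_cast_of_lt (Finset.mem_range.1 hj)
  · intro c _; exact ZMod.natCast_rightInverse c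
  · intro j hj; rfl

lemma sum_shift [NeZero n] (z : V n) (a : ZMod n) :
    ∑ j ∈ Finset.range n, z (a + (j : ZMod n) + 1) = ∑ j ∈ Finset.range n, z (j : ZMod n) := by
  rw [sum_range_eq_univ (fun c => z (a + c + 1)), sum_range_eq_univ z]
  exact Fintype.sum_equiv ((Equiv.addRight (1 : ZMod n)).trans (Equiv.addLeft a)) _ _
    (fun c => by simp [Equiv.addLeft, Equiv.addRight]; ring_nf)

lemma Qe_eq_inf' (hn : 0 < n) (x y : V n) (a : ZMod n) :
    Qe x y a = (Finset.range n).inf' ⟨0, Finset.mem_range.2 hn⟩ (Qt x y a) := by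
  apply le_antisymm
  · obtain ⟨k0, hk0, hk0e⟩ := Finset.exists_mem_eq_inf' ⟨0, Finset.mem_range.2 hn⟩ (Qt x y a)
    rw [hk0e, Qe, Finset.fold_min_le]
    rcases Nat.eq_zero_or_pos k0 with h | h
    · exact Or.inl (h ▸ le_refl _)
    · exact Or.inr ⟨k0, Finset.mem_Ico.2 ⟨h, Finset.mem_range.1 hk0⟩, le_refl _⟩
  · rw [Qe, Finset.le_fold_min]
    exact ⟨Finset.inf'_le _ (Finset.mem_range.2 hn),
      fun k hk => Finset.inf'_le _ (Finset.mem_range.2 (Finset.mem_Ico.1 hk).2)⟩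

lemma inf'_stab {s : Finset ℕ} (hs : s.Nonempty) (f g : ℕ → ℤ) (m : ℕ) (hm : m ∈ s)
    (hfg : ∀ k ∈ s, f k ≤ g k) (hgm : g m = f m)
    (hmin : ∀ k ∈ s, f k ≠ g k → f m ≤ f k) :
    s.inf' hs g = s.inf' hs f := by
  apply le_antisymm
  · obtain ⟨k0, hk0, hk0e⟩ := Finset.exists_mem_eq_inf' hs f
    rw [hk0e]
    by_cases h : f k0 = g k0
    · exact h ▸ Finset.inf'_le _ hk0
    · calc s.inf' hs g ≤ g m := Finset.inf'_le _ hm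
        _ = f m := hgm
        _ ≤ f k0 := hmin k0 hk0 h
  · exact Finset.le_inf' _ _ fun k hk => le_trans (Finset.inf'_le _ hk) (hfg k hk)

lemma cond_eq [NeZero n] (i a : ZMod n) {j : ℕ} (hj : j < n) :
    (a + (j : ZMod n) + 1 = i) ↔ j = (i - a - 1).val := by
  constructor
  · intro h
    have : (j : ZMod n) = i - a - 1 := by linear_combination h
    rw [← ZMod.val_cast_of_lt hj, this]
  · intro h
    subst h
    rw [ZMod.natCast_rightInverse (i - a - 1)]
    ring

lemma sum_eV [NeZero n] (i a : ZMod n) (s : Finset ℕ) (hs : ∀ j ∈ s, j < n) :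
    ∑ j ∈ s, eV i (a + (j : ZMod n) + 1) = if (i - a - 1).val ∈ s then 1 else 0 := by
  have h : ∀ j ∈ s, eV i (a + (j : ZMod n) + 1)
      = if j = (i - a - 1).val then (1 : ℤ) else 0 := by
    intro j hj
    rw [eV]
    exact if_congr (cond_eq i a (hs j hj)) rfl rfl
  rw [Finset.sum_congr rfl h, Finset.sum_ite_eq' s ((i - a - 1).val) (fun _ => (1 : ℤ))]

lemma Qt_add_left [NeZero n] (x y : V n) (i a : ZMod n) (k : ℕ) (hk : k ≤ n) :
    Qt (x + eV i) y a k = Qt x y a k + (if (i - a - 1).val < k then 1 else 0) := by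
  unfold Qt
  simp only [Pi.add_apply, Finset.sum_add_distrib]
  rw [sum_eV i a _ (fun j hj => lt_of_lt_of_le (Finset.mem_range.1 hj) hk)]
  simp only [Finset.mem_range]
  ring

lemma Qt_add_right [NeZero n] (x y : V n) (i a : ZMod n) (k : ℕ) :
    Qt x (y + eV i) a k = Qt x y a k + (if k + 1 ≤ (i - a - 1).val then 1 else 0) := by
  unfold Qt
  simp only [Pi.add_apply, Finset.sum_add_distrib]
  rw [sum_eV i a _ (fun j hj => (Finset.mem_Ico.1 hj).2)]
  have : (i - a - 1).val ∈ Finset.Ico (k + 1) n ↔ k + 1 ≤ (i - a - 1).val := by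
    rw [Finset.mem_Ico]
    exact ⟨fun h => h.1, fun h => ⟨h, ZMod.val_lt _⟩⟩
  rw [if_congr this rfl rfl]
  ring

lemma factA [NeZero n] (x y : V n) (hx : ∀ j, 0 ≤ x j) (hy : ∀ j, 0 ≤ y j) (i a : ZMod n)
    (hxi : (∑ j ∈ Finset.range n, y (j : ZMod n)) ≤ x i) {k : ℕ} (hk : k < n)
    (hmk : (i - a - 1).val < k) : Qt x y a (i - a - 1).val ≤ Qt x y a k := by
  set m := (i - a - 1).val with hm
  have him : a + ((m : ℕ) : ZMod n) + 1 = i := (cond_eq i a (ZMod.val_lt _)).2 rfl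
  calc Qt x y a m
      ≤ (∑ j ∈ Finset.range m, x (a + (j : ZMod n) + 1))
        + ∑ j ∈ Finset.range n, y (j : ZMod n) := by
        rw [Qt, ← sum_shift (z := y) (a := a)]
        exact add_le_add_right (Finset.sum_le_sum_of_subset_of_nonneg
          (fun j hj => Finset.mem_range.2 (Finset.mem_Ico.1 hj).2) (fun _ _ _ => hy _)) _
    _ ≤ (∑ j ∈ Finset.range m, x (a + (j : ZMod n) + 1)) + x i := add_le_add_right hxi _
    _ = ∑ j ∈ Finset.range (m + 1), x (a + (j : ZMod n) + 1) := by
        rw [Finset.sum_range_succ, him]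
    _ ≤ ∑ j ∈ Finset.range k, x (a + (j : ZMod n) + 1) :=
        Finset.sum_le_sum_of_subset_of_nonneg (Finset.range_subset_range.2 hmk)
          (fun _ _ _ => hx _)
    _ ≤ Qt x y a k := le_add_of_nonneg_right (Finset.sum_nonneg fun _ _ => hy _)

lemma factB [NeZero n] (x y : V n) (hx : ∀ j, 0 ≤ x j) (hy : ∀ j, 0 ≤ y j) (i a : ZMod n)
    (hyi : (∑ j ∈ Finset.range n, x (j : ZMod n)) ≤ y i) {k : ℕ}
    (hkm : k + 1 ≤ (i - a - 1).val) : Qt x y a (i - a - 1).val ≤ Qt x y a k := by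
  set m := (i - a - 1).val with hm
  have hmn : m < n := ZMod.val_lt _
  have him : a + ((m : ℕ) : ZMod n) + 1 = i := (cond_eq i a hmn).2 rfl
  calc Qt x y a m
      ≤ (∑ j ∈ Finset.range n, x (j : ZMod n))
        + ∑ j ∈ Finset.Ico (m + 1) n, y (a + (j : ZMod n) + 1) := by
        rw [Qt, ← sum_shift (z := x) (a := a)]
        exact add_le_add_left (Finset.sum_le_sum_of_subset_of_nonneg
          (Finset.range_subset_range.2 hmn.le) (fun _ _ _ => hx _)) _
    _ ≤ y i + ∑ j ∈ Finset.Ico (m + 1) n, y (a + (j : ZMod n) + 1) := add_le_add_left hyi _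
    _ = ∑ j ∈ Finset.Ico m n, y (a + (j : ZMod n) + 1) := by
        rw [← Finset.insert_Ico_add_one_left_eq_Ico hmn, Finset.sum_insert (by simp), him]
    _ ≤ ∑ j ∈ Finset.Ico (k + 1) n, y (a + (j : ZMod n) + 1) :=
        Finset.sum_le_sum_of_subset_of_nonneg (Finset.Ico_subset_Ico hkm le_rfl)
          (fun _ _ _ => hy _)
    _ ≤ Qt x y a k := le_add_of_nonneg_left (Finset.sum_nonneg fun _ _ => hx _)

lemma Qe_stab_left (hn : 0 < n) (x y : V n) (hx : ∀ j, 0 ≤ x j) (hy : ∀ j, 0 ≤ y j)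
    (i : ZMod n) (hxi : (∑ j ∈ Finset.range n, y (j : ZMod n)) ≤ x i) (a : ZMod n) :
    Qe (x + eV i) y a = Qe x y a := by
  haveI : NeZero n := ⟨hn.ne'⟩
  rw [Qe_eq_inf' hn, Qe_eq_inf' hn]
  apply inf'_stab _ _ _ ((i - a - 1).val) (Finset.mem_range.2 (ZMod.val_lt _))
  · intro k hk
    rw [Qt_add_left _ _ _ _ _ (Finset.mem_range.1 hk).le]
    exact le_add_of_nonneg_right (by split_ifs <;> norm_num)
  · rw [Qt_add_left _ _ _ _ _ (ZMod.val_lt _).le, if_neg (lt_irrefl _), add_zero]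
  · intro k hk hne
    rw [Qt_add_left _ _ _ _ _ (Finset.mem_range.1 hk).le] at hne
    have hlt : (i - a - 1).val < k := by
      by_contra h
      simp [h] at hne
    exact factA x y hx hy i a hxi (Finset.mem_range.1 hk) hlt

lemma Qe_stab_right (hn : 0 < n) (x y : V n) (hx : ∀ j, 0 ≤ x j) (hy : ∀ j, 0 ≤ y j)
    (i : ZMod n) (hyi : (∑ j ∈ Finset.range n, x (j : ZMod n)) ≤ y i) (a : ZMod n) :
    Qe x (y + eV i) a = Qe x y a := by
  haveI : NeZero n := ⟨hn.ne'⟩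
  rw [Qe_eq_inf' hn, Qe_eq_inf' hn]
  apply inf'_stab _ _ _ ((i - a - 1).val) (Finset.mem_range.2 (ZMod.val_lt _))
  · intro k hk
    rw [Qt_add_right]
    exact le_add_of_nonneg_right (by split_ifs <;> norm_num)
  · rw [Qt_add_right, if_neg (by omega), add_zero]
  · intro k hk hne
    rw [Qt_add_right] at hne
    have hlt : k + 1 ≤ (i - a - 1).val := by
      by_contra h
      simp [h] at hne
    exact factB x y hx hy i a hyi hlt

/-- stability of the combinatorial `R` under large coordinates.
Fix `n ≥ 3` and an index `i`.  For every `y ∈ (ℤ≥0)^n`, the bound `N = y_1+⋯+y_n` works: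
for every `x ∈ (ℤ≥0)^n` with `x_i ≥ N`, (a) `Q_a(x+e_i, y) = Q_a(x, y)` for every `a`,
and consequently (b) `ōR(x+e_i, y) = (ỹ, x̃+e_i)` where `ōR(x,y) = (ỹ, x̃)`.
Symmetrically, for every `x` there exists `N'` such that for all `y` with `y_i ≥ N'`,
`ōR(x, y+e_i) = (ỹ+e_i, x̃)`. -/
theorem R_stability (n : ℕ) (hn : 3 ≤ n) (i : ZMod n) :
    (∀ y : V n, (∀ j, 0 ≤ y j) →
      ∀ x : V n, (∀ j, 0 ≤ x j) →
        (∑ j ∈ Finset.range n, y (j : ZMod n)) ≤ x i →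
          (∀ a, Qe (x + eV i) y a = Qe x y a) ∧
            Rbar (x + eV i) y = ((Rbar x y).1, (Rbar x y).2 + eV i)) ∧
      ∀ x : V n, (∀ j, 0 ≤ x j) →
        ∃ N' : ℤ, ∀ y : V n, (∀ j, 0 ≤ y j) → N' ≤ y i →
          Rbar x (y + eV i) = ((Rbar x y).1 + eV i, (Rbar x y).2) := by
  have hn0 : 0 < n := by omega
  constructor
  · intro y hy x hx hxi
    have hq := Qe_stab_left hn0 x y hx hy i hxi
    refine ⟨hq, ?_⟩
    unfold Rbar
    refine Prod.ext ?_ ?_ <;> funext a <;>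
      simp only [Pi.add_apply, hq] <;> ring
  · intro x hx
    refine ⟨∑ j ∈ Finset.range n, x (j : ZMod n), fun y hy hyi => ?_⟩
    have hq := Qe_stab_right hn0 x y hx hy i hyi
    unfold Rbar
    refine Prod.ext ?_ ?_ <;> funext a <;>
      simp only [Pi.add_apply, hq] <;> ring

end BBS
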